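/- With \(\tau_n \in \mathbb{Q}\mathfrak{S}_n\) as the Tsetlin library element, the dimension of the kernel of the operator \(f \mapsto f\tau_n\) on \(\mathbb{Q}\mathfrak{S}_n\) equals the derangement number \(d_n\), and more generally the eigenspace for the eigenvalue \(k\) (for \(0 \le k \le n-2\) or \(k=n\)) has dimension \(d_{n,k}\), the number of permutations of \(\{1,\dots,n\}\) with exactly \(k\) fixed points. -/

import Mathlib

set_option maxHeartbeats 1000000

open Equiv Polynomial Finset

/-- The Tsetlin library element `τ_n = ∑_{k=1}^n σ_k ∈ ℚ𝔖_n`, where `σ_k` has one-line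
notation `k 1 2 ⋯ k̂ ⋯ n`. -/
noncomputable def tsetlin (n : ℕ) : MonoidAlgebra ℚ (Perm (Fin n)) :=
  ∑ k : Fin n, MonoidAlgebra.of ℚ (Perm (Fin n)) (Fin.cycleRange k)⁻¹

/-- The number of permutations of `{1,…,n}` with exactly `k` fixed points. -/
noncomputable def fixCount (n k : ℕ) : ℕ :=
  Nat.card {σ : Perm (Fin n) // Nat.card {i : Fin n // σ i = i} = k}

namespace TsetlinAux

/-- `τ̄_n = ∑ cycleRange k`, the antipode of the Tsetlin element. -/
noncomputable def tbar (n : ℕ) : MonoidAlgebra ℚ (Perm (Fin n)) :=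
  ∑ k : Fin n, MonoidAlgebra.single (Fin.cycleRange k) (1 : ℚ)

/-- Embedding of `Perm (Fin n)` into `Perm (Fin (n+1))` shifting everything by one and
fixing `0`. -/
def embp {n : ℕ} (u : Perm (Fin n)) : Perm (Fin (n + 1)) where
  toFun := Fin.cases 0 (fun y => (u y).succ)
  invFun := Fin.cases 0 (fun y => (u⁻¹ y).succ)
  left_inv := by
    intro x
    induction x using Fin.cases <;> simp
  right_inv := by
    intro x
    induction x using Fin.cases <;> simp

@[simp] lemma embp_zero {n : ℕ} (u : Perm (Fin n)) : embp u 0 = 0 := rfl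

@[simp] lemma embp_succ {n : ℕ} (u : Perm (Fin n)) (y : Fin n) :
    embp u y.succ = (u y).succ := by
  simp [embp]

/-- `embp` as a monoid hom. -/
def embHom (n : ℕ) : Perm (Fin n) →* Perm (Fin (n + 1)) where
  toFun := embp
  map_one' := by
    ext x
    induction x using Fin.cases <;> simp
  map_mul' := by
    intro u v
    ext x
    induction x using Fin.cases <;> simp

lemma cycleRange_val {m : ℕ} (i x : Fin (m + 1)) :
    (Fin.cycleRange i x).val =
      if x.val < i.val then x.val + 1 else if x.val = i.val then 0 else x.val := by
  rcases lt_trichotomy x i with h | h | h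
  · rw [Fin.coe_cycleRange_of_lt h, if_pos (Fin.lt_def.mp h)]
  · subst h
    simp [Fin.cycleRange_self]
  · rw [Fin.cycleRange_of_gt h, if_neg (by omega), if_neg (by exact fun hh => absurd (Fin.ext hh) (ne_of_gt h))]

lemma embp_val {n : ℕ} (u : Perm (Fin n)) (x : Fin (n + 1)) :
    (embp u x).val =
      if h : x.val = 0 then 0 else (u ⟨x.val - 1, by have := x.isLt; omega⟩).val + 1 := by
  induction x using Fin.cases with
  | zero => simp
  | succ y =>
      rw [embp_succ, dif_neg (by simp)]
      simp only [Fin.val_succ, Nat.add_sub_cancel, Fin.eta]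

/-- The cycle `(1 2 ⋯ j+1)` in `Perm (Fin (n+1))`. -/
def dd {n : ℕ} (j : Fin n) : Perm (Fin (n + 1)) := embp (Fin.cycleRange j)

lemma dd_val {n : ℕ} (j : Fin n) (x : Fin (n + 1)) :
    (dd j x).val =
      if x.val = 0 then 0
      else if x.val - 1 < j.val then x.val + 1
      else if x.val - 1 = j.val then 1
      else x.val := by
  cases n with
  | zero => exact j.elim0
  | succ m =>
      rw [dd, embp_val]
      by_cases h : x.val = 0
      · simp [h]
      · rw [dif_neg h, if_neg h, cycleRange_val]
        simp only []
        split_ifs <;> first | contradiction | omega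

lemma identity_I1 {n : ℕ} (r j : Fin n) (h : r ≤ j) :
    Fin.cycleRange r.succ * Fin.cycleRange j.succ =
      dd j * Fin.cycleRange (r.castSucc) := by
  have hv : r.val ≤ j.val := h
  have hr := r.isLt
  have hj := j.isLt
  apply Equiv.ext
  intro x
  have hx := x.isLt
  rw [Perm.mul_apply, Perm.mul_apply]
  apply Fin.ext
  rw [cycleRange_val, cycleRange_val, dd_val, cycleRange_val]
  simp only [Fin.val_succ, Fin.coe_castSucc]
  split_ifs <;> first | contradiction | omega

lemma identity_I2 {n : ℕ} (j : Fin n) (p : Fin (n + 1)) (h : j.val < p.val) :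
    Fin.cycleRange p * Fin.cycleRange j.castSucc =
      dd j * Fin.cycleRange p := by
  have hj := j.isLt
  have hp := p.isLt
  apply Equiv.ext
  intro x
  have hx := x.isLt
  rw [Perm.mul_apply, Perm.mul_apply]
  apply Fin.ext
  rw [cycleRange_val, cycleRange_val, dd_val, cycleRange_val]
  simp only [Fin.coe_castSucc]
  split_ifs <;> first | contradiction | omega

end TsetlinAux

namespace TsetlinAux

/-- Algebra hom induced by `embHom`. -/
noncomputable def iota (n : ℕ) :
    MonoidAlgebra ℚ (Perm (Fin n)) →ₐ[ℚ] MonoidAlgebra ℚ (Perm (Fin (n + 1))) :=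
  MonoidAlgebra.mapDomainAlgHom ℚ ℚ (embHom n)

lemma iota_single {n : ℕ} (u : Perm (Fin n)) (r : ℚ) :
    iota n (MonoidAlgebra.single u r) = MonoidAlgebra.single (embp u) r := by
  simp [iota, MonoidAlgebra.mapDomainAlgHom, MonoidAlgebra.mapDomainRingHom,
    Finsupp.mapDomain_single]
  rfl

lemma iota_tbar (n : ℕ) :
    iota n (tbar n) = ∑ j : Fin n, MonoidAlgebra.single (dd j) (1 : ℚ) := by
  rw [tbar, map_sum]
  exact Finset.sum_congr rfl fun j _ => iota_single _ _

/-- The index bijection used for the master identity; it is an involution. -/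
def flipPair {n : ℕ} : Fin n × Fin (n + 1) → Fin n × Fin (n + 1) := fun rk =>
  if h : rk.2.val ≤ rk.1.val then (⟨rk.2.val, lt_of_le_of_lt h rk.1.isLt⟩, rk.1.succ)
  else (⟨rk.2.val - 1, by have h1 := rk.1.isLt; have h2 := rk.2.isLt; omega⟩, rk.1.castSucc)

lemma flipPair_pos {n : ℕ} (r : Fin n) (k : Fin (n + 1)) (h : k.val ≤ r.val) :
    flipPair (r, k) = (⟨k.val, lt_of_le_of_lt h r.isLt⟩, r.succ) := dif_pos h

lemma flipPair_neg {n : ℕ} (r : Fin n) (k : Fin (n + 1)) (h : ¬ k.val ≤ r.val) :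
    flipPair (r, k) =
      (⟨k.val - 1, by have h1 := r.isLt; have h2 := k.isLt; omega⟩, r.castSucc) := dif_neg h

lemma flipPair_invol {n : ℕ} (a : Fin n × Fin (n + 1)) : flipPair (flipPair a) = a := by
  obtain ⟨r, k⟩ := a
  by_cases h : k.val ≤ r.val
  · rw [flipPair_pos r k h, flipPair_neg _ _ (by simp; omega)]
    refine Prod.ext (Fin.ext ?_) (Fin.ext ?_) <;> simp
  · rw [flipPair_neg r k h, flipPair_pos _ _ (by simp; omega)]
    refine Prod.ext (Fin.ext ?_) (Fin.ext ?_) <;> simp <;> omega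

/-- `flipPair` as an `Equiv`. -/
def flipEquiv (n : ℕ) : (Fin n × Fin (n + 1)) ≃ (Fin n × Fin (n + 1)) :=
  ⟨flipPair, flipPair, flipPair_invol, flipPair_invol⟩

/-- The master identity: `T² = T + ι(τ̄')T` for `T = τ̄_{n+1}`. -/
lemma claim2 (n : ℕ) :
    (∑ r : Fin n, ∑ k : Fin (n + 1),
        MonoidAlgebra.single (Fin.cycleRange r.succ * Fin.cycleRange k) (1 : ℚ)) =
      ∑ j : Fin n, ∑ q : Fin (n + 1),
        MonoidAlgebra.single (dd j * Fin.cycleRange q) (1 : ℚ) := by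
  rw [← Finset.sum_product', ← Finset.sum_product', Finset.univ_product_univ]
  refine Fintype.sum_equiv (flipEquiv n)
    (fun a => MonoidAlgebra.single (Fin.cycleRange a.1.succ * Fin.cycleRange a.2) (1:ℚ))
    (fun a => MonoidAlgebra.single (dd a.1 * Fin.cycleRange a.2) (1:ℚ)) (fun a => ?_)
  obtain ⟨r, k⟩ := a
  show _ = MonoidAlgebra.single (dd (flipPair (r,k)).1 * Fin.cycleRange (flipPair (r,k)).2) (1:ℚ)
  by_cases h : k.val ≤ r.val
  · rw [flipPair_pos r k h]
    dsimp only
    have hk : (⟨k.val, lt_of_le_of_lt h r.isLt⟩ : Fin n).castSucc = k := Fin.ext (by simp)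
    have hk2 : Fin.cycleRange k =
        Fin.cycleRange ((⟨k.val, lt_of_le_of_lt h r.isLt⟩ : Fin n).castSucc) := by rw [hk]
    rw [hk2, identity_I2 _ _ (by simp; omega)]
  · rw [flipPair_neg r k h]
    dsimp only
    have hk : (⟨k.val - 1, by have h1 := r.isLt; have h2 := k.isLt; omega⟩ : Fin n).succ = k :=
      Fin.ext (by simp; omega)
    have hk2 : Fin.cycleRange k = Fin.cycleRange
        ((⟨k.val - 1, by have h1 := r.isLt; have h2 := k.isLt; omega⟩ : Fin n).succ) := by
      rw [hk]
    rw [hk2, identity_I1 _ _ (by simp [Fin.le_def]; omega)]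

lemma master (n : ℕ) :
    tbar (n + 1) * tbar (n + 1) = tbar (n + 1) + iota n (tbar n) * tbar (n + 1) := by
  have e1 : tbar (n + 1) * tbar (n + 1) = ∑ p : Fin (n + 1), ∑ k : Fin (n + 1),
      MonoidAlgebra.single (Fin.cycleRange p * Fin.cycleRange k) (1 : ℚ) := by
    rw [tbar, Finset.sum_mul_sum]
    simp only [MonoidAlgebra.single_mul_single, one_mul]
  have e2 : iota n (tbar n) * tbar (n + 1) = ∑ j : Fin n, ∑ q : Fin (n + 1),
      MonoidAlgebra.single (dd j * Fin.cycleRange q) (1 : ℚ) := by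
    rw [iota_tbar, tbar, Finset.sum_mul_sum]
    simp only [MonoidAlgebra.single_mul_single, one_mul]
  have e3 : (∑ k : Fin (n + 1),
      MonoidAlgebra.single (Fin.cycleRange (0 : Fin (n+1)) * Fin.cycleRange k) (1 : ℚ)) =
      tbar (n + 1) := by
    rw [tbar]
    refine Finset.sum_congr rfl fun k _ => ?_
    rw [Fin.cycleRange_zero, one_mul]
  rw [e1, e2, Fin.sum_univ_succ (f := fun p => ∑ k : Fin (n+1),
    MonoidAlgebra.single (Fin.cycleRange p * Fin.cycleRange k) (1:ℚ)), e3, claim2 n]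

end TsetlinAux

namespace TsetlinAux

open Polynomial

noncomputable def qpoly (n : ℕ) : Polynomial ℚ := ∏ k ∈ Finset.range (n + 1), (X - C (k : ℚ))

lemma pow_formula (n m : ℕ) :
    tbar (n + 1) ^ (m + 1) = (1 + iota n (tbar n)) ^ m * tbar (n + 1) := by
  induction m with
  | zero => simp
  | succ m ih =>
      have h2 : tbar (n + 1) * tbar (n + 1) = (1 + iota n (tbar n)) * tbar (n + 1) := by
        rw [add_mul, one_mul]
        exact master n
      rw [pow_succ, ih, mul_assoc, h2, ← mul_assoc, ← pow_succ]

lemma poly_mul (n : ℕ) (f : Polynomial ℚ) :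
    aeval (tbar (n + 1)) f * tbar (n + 1) = aeval (1 + iota n (tbar n)) f * tbar (n + 1) := by
  induction f using Polynomial.induction_on' with
  | add p q hp hq => rw [map_add, map_add, add_mul, add_mul, hp, hq]
  | monomial m c =>
      rw [aeval_monomial, aeval_monomial, mul_assoc, mul_assoc, ← pow_succ,
        pow_formula n m]

lemma aeval_qpoly_tbar (n : ℕ) : aeval (tbar n) (qpoly n) = 0 := by
  induction n with
  | zero =>
      have : tbar 0 = 0 := by simp [tbar]
      simp [qpoly, this]
  | succ n ih =>
      have hsplit : qpoly (n + 1) =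
          (∏ k ∈ Finset.range (n + 1), (X - C ((k : ℚ) + 1))) * (X - C (0 : ℚ)) := by
        rw [qpoly, Finset.prod_range_succ' (fun k => X - C (k : ℚ))]
        refine congrArg₂ (· * ·) (Finset.prod_congr rfl fun k _ => ?_) rfl
        push_cast
        ring
      set r : Polynomial ℚ := ∏ k ∈ Finset.range (n + 1), (X - C ((k : ℚ) + 1)) with hr
      have hcomp : r.comp (X + C 1) = qpoly n := by
        rw [hr, qpoly]
        rw [Polynomial.prod_comp]
        refine Finset.prod_congr rfl fun k _ => ?_
        simp [sub_comp]
      have h1 : aeval (tbar (n + 1)) (qpoly (n + 1)) = aeval (tbar (n + 1)) r * tbar (n + 1) := by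
        rw [hsplit, map_mul]
        simp
      rw [h1, poly_mul n r]
      have h2 : aeval (1 + iota n (tbar n)) r = 0 := by
        have hc := aeval_comp (x := iota n (tbar n)) (p := r) (q := (X + C 1 : Polynomial ℚ))
        rw [hcomp] at hc
        have hs : aeval (iota n (tbar n)) ((X + C 1 : Polynomial ℚ)) = 1 + iota n (tbar n) := by
          simp [add_comm]
        have h0 : aeval (iota n (tbar n)) (qpoly n) = 0 := by
          rw [Polynomial.aeval_algHom_apply, ih, map_zero]
        rw [← hs]
        exact hc.symm.trans h0
      rw [h2, zero_mul]

end TsetlinAux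

namespace TsetlinAux

/-- The antipode of the group algebra (inversion on the group). -/
noncomputable def antip (n : ℕ) :
    MonoidAlgebra ℚ (Perm (Fin n)) ≃ₗ[ℚ] MonoidAlgebra ℚ (Perm (Fin n)) :=
  MonoidAlgebra.mapDomainLinearEquiv ℚ ℚ (Equiv.inv (Perm (Fin n)))

lemma antip_single {n : ℕ} (g : Perm (Fin n)) (r : ℚ) :
    antip n (MonoidAlgebra.single g r) = MonoidAlgebra.single g⁻¹ r := by
  exact MonoidAlgebra.mapDomainLinearEquiv_single _ _ _

lemma antip_apply_one {n : ℕ} (x : MonoidAlgebra ℚ (Perm (Fin n))) :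
    (antip n x).coeff 1 = x.coeff 1 := by
  induction x using MonoidAlgebra.induction_linear with
  | zero => simp
  | add a b ha hb => rw [map_add, MonoidAlgebra.coeff_add, MonoidAlgebra.coeff_add, Finsupp.add_apply, Finsupp.add_apply, ha, hb]
  | single g r =>
      rw [antip_single, MonoidAlgebra.coeff_single, MonoidAlgebra.coeff_single, Finsupp.single_apply, Finsupp.single_apply]
      simp [inv_eq_one]

lemma antip_mul {n : ℕ} (x y : MonoidAlgebra ℚ (Perm (Fin n))) :
    antip n (x * y) = antip n y * antip n x := by
  induction x using MonoidAlgebra.induction_linear with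
  | zero => simp
  | add a b ha hb => rw [add_mul, map_add, ha, hb, map_add, mul_add]
  | single g r =>
      induction y using MonoidAlgebra.induction_linear with
      | zero => simp
      | add a b ha hb => rw [mul_add, map_add, ha, hb, map_add, add_mul]
      | single h s =>
          rw [MonoidAlgebra.single_mul_single, antip_single, antip_single, antip_single,
            MonoidAlgebra.single_mul_single, mul_inv_rev, mul_comm r s]

lemma antip_one {n : ℕ} : antip n 1 = 1 := by
  rw [MonoidAlgebra.one_def, antip_single, inv_one]

lemma antip_pow {n : ℕ} (x : MonoidAlgebra ℚ (Perm (Fin n))) (t : ℕ) :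
    antip n (x ^ t) = (antip n x) ^ t := by
  induction t with
  | zero => simpa using antip_one
  | succ t ih => rw [pow_succ, antip_mul, ih, pow_succ']

lemma antip_tbar (n : ℕ) : antip n (tbar n) = tsetlin n := by
  rw [tbar, map_sum, tsetlin]
  refine Finset.sum_congr rfl fun k _ => ?_
  rw [antip_single]
  rfl

lemma aeval_qpoly_tsetlin (n : ℕ) : Polynomial.aeval (tsetlin n) (qpoly n) = 0 := by
  have key : Polynomial.aeval (tsetlin n) (qpoly n)
      = antip n (Polynomial.aeval (tbar n) (qpoly n)) := by
    rw [Polynomial.aeval_eq_sum_range (p := qpoly n) (tsetlin n),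
      Polynomial.aeval_eq_sum_range (p := qpoly n) (tbar n), map_sum]
    refine Finset.sum_congr rfl fun i _ => ?_
    rw [map_smul, antip_pow, antip_tbar]
  rw [key, aeval_qpoly_tbar, map_zero]

/-- `Nseq n t` is the coefficient of the identity in `τ̄ⁿ^t`. -/
noncomputable def Nseq (n t : ℕ) : ℚ := ((tbar n) ^ t).coeff 1

lemma Nseq_zero (n : ℕ) : Nseq n 0 = 1 := by
  rw [Nseq, pow_zero, MonoidAlgebra.one_def]
  simp

lemma Nseq_of_zero (t : ℕ) : Nseq 0 (t + 1) = 0 := by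
  have : tbar 0 = 0 := by simp [tbar]
  rw [Nseq, this, zero_pow (Nat.succ_ne_zero t)]
  rfl

lemma tsetlin_pow_apply_one (n t : ℕ) : ((tsetlin n) ^ t).coeff 1 = Nseq n t := by
  rw [← antip_tbar, ← antip_pow, antip_apply_one, Nseq]

lemma embp_injective {n : ℕ} : Function.Injective (embp (n := n)) := by
  intro u v h
  ext y
  have := congrArg (fun w => w y.succ) h
  simp only [embp_succ] at this
  exact congrArg Fin.val (Fin.succ_injective _ this)

lemma embp_one {n : ℕ} : embp (1 : Perm (Fin n)) = 1 := (embHom n).map_one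

lemma embp_inv {n : ℕ} (u : Perm (Fin n)) : (embp u)⁻¹ = embp u⁻¹ :=
  (map_inv (embHom n) u).symm

lemma cycleRange_eq_inv_embp {n : ℕ} (k : Fin (n + 1)) (u : Perm (Fin n)) :
    Fin.cycleRange k = (embp u)⁻¹ ↔ (k = 0 ∧ u = 1) := by
  constructor
  · intro h
    have hinv0 : (embp u)⁻¹ 0 = 0 := by
      conv_lhs => rw [← embp_zero u]
      exact (embp u).symm_apply_apply _
    have h0 : Fin.cycleRange k 0 = 0 := by rw [h, hinv0]
    have hk : k = 0 := by
      by_contra hkne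
      have hv0 : k.val ≠ 0 := fun hc => hkne (Fin.ext hc)
      have hpos : 0 < k.val := Nat.pos_of_ne_zero hv0
      have hv : (Fin.cycleRange k 0).val = 1 := by
        rw [cycleRange_val]
        simp only [Fin.val_zero]
        simp [hpos]
      rw [h0] at hv
      simp at hv
    subst hk
    rw [Fin.cycleRange_zero] at h
    have hemb : embp u = 1 := inv_eq_one.mp h.symm
    refine ⟨rfl, embp_injective ?_⟩
    rw [hemb, embp_one]
  · rintro ⟨rfl, rfl⟩
    rw [embp_one, inv_one]
    exact Fin.cycleRange_zero (n + 1)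

lemma eval_iota_mul_tbar {n : ℕ} (x : MonoidAlgebra ℚ (Perm (Fin n))) :
    ((iota n x) * tbar (n + 1)).coeff 1 = x.coeff 1 := by
  induction x using MonoidAlgebra.induction_linear with
  | zero => simp
  | add a b ha hb => rw [map_add, add_mul, MonoidAlgebra.coeff_add, Finsupp.add_apply, ha, hb, MonoidAlgebra.coeff_add, Finsupp.add_apply]
  | single u r =>
      rw [iota_single, MonoidAlgebra.coeff_single_mul_apply]
      have hval : (tbar (n + 1)).coeff ((embp u)⁻¹ * 1) = if u = 1 then 1 else 0 := by
        rw [mul_one, tbar, MonoidAlgebra.coeff_sum, Finset.sum_apply']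
        have hterm : ∀ k : Fin (n + 1),
            (MonoidAlgebra.single (Fin.cycleRange k) (1 : ℚ)).coeff ((embp u)⁻¹) =
              if k = 0 ∧ u = 1 then 1 else 0 := by
          intro k
          rw [MonoidAlgebra.coeff_single, Finsupp.single_apply]
          congr 1
          rw [eq_iff_iff]
          exact cycleRange_eq_inv_embp k u
        rw [Finset.sum_congr rfl fun k _ => hterm k]
        by_cases hu : u = 1
        · subst hu
          simp
        · simp [hu]
      rw [hval, MonoidAlgebra.coeff_single, Finsupp.single_apply]
      by_cases hu : u = 1 <;> simp [hu]

end TsetlinAux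

namespace TsetlinAux

lemma Nrec (n t : ℕ) :
    Nseq (n + 1) (t + 1) = ∑ s ∈ Finset.range (t + 1), (t.choose s : ℚ) * Nseq n s := by
  rw [Nseq, pow_formula n t]
  have hbin : (1 + iota n (tbar n)) ^ t =
      ∑ s ∈ Finset.range (t + 1), iota n ((tbar n) ^ s) * (t.choose s : MonoidAlgebra ℚ (Perm (Fin (n+1)))) := by
    rw [add_comm (1 : MonoidAlgebra ℚ (Perm (Fin (n+1)))) (iota n (tbar n))]
    rw [Commute.add_pow (Commute.one_right (iota n (tbar n))) t]
    refine Finset.sum_congr rfl fun s _ => ?_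
    rw [one_pow, mul_one, map_pow]
  rw [hbin, Finset.sum_mul, MonoidAlgebra.coeff_sum, Finsupp.finset_sum_apply]
  refine Finset.sum_congr rfl fun s _ => ?_
  have hc : iota n ((tbar n) ^ s) * (t.choose s : MonoidAlgebra ℚ (Perm (Fin (n+1)))) * tbar (n+1)
      = iota n ((tbar n) ^ s) * tbar (n+1) * (t.choose s : MonoidAlgebra ℚ (Perm (Fin (n+1)))) := by
    rw [mul_assoc, mul_assoc]
    congr 1
    exact (Nat.cast_commute (t.choose s) (tbar (n+1))).eq
  rw [hc]
  rw [MonoidAlgebra.natCast_def, MonoidAlgebra.mul_single_apply, inv_one, mul_one,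
    eval_iota_mul_tbar ((tbar n) ^ s), mul_comm]
  rfl

end TsetlinAux

namespace TsetlinAux

/-- Stirling numbers of the second kind. -/
def St : ℕ → ℕ → ℕ
  | 0, 0 => 1
  | 0, _ + 1 => 0
  | _ + 1, 0 => 0
  | t + 1, s + 1 => (s + 1) * St t (s + 1) + St t s

@[simp] lemma St_zero_zero : St 0 0 = 1 := rfl
@[simp] lemma St_zero_succ (s : ℕ) : St 0 (s + 1) = 0 := rfl
@[simp] lemma St_succ_zero (t : ℕ) : St (t + 1) 0 = 0 := rfl
lemma St_succ_succ (t s : ℕ) : St (t + 1) (s + 1) = (s + 1) * St t (s + 1) + St t s := rfl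

lemma St_eq_zero_of_lt : ∀ {t s : ℕ}, t < s → St t s = 0 := by
  intro t
  induction t with
  | zero => intro s hs; match s, hs with | s + 1, _ => rfl
  | succ t ih =>
      intro s hs
      match s, hs with
      | s + 1, hs =>
          rw [St_succ_succ, ih (by omega), ih (by omega)]
          simp

lemma St_rec (t : ℕ) : ∀ s : ℕ,
    St (t + 1) (s + 1) = ∑ j ∈ Finset.range (t + 1), t.choose j * St j s := by
  induction t with
  | zero =>
      intro s
      cases s <;> simp [St_succ_succ]
  | succ t ih =>
      intro s
      have hps : ∀ j, (t + 1).choose (j + 1) * St (j + 1) s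
          = t.choose j * St (j + 1) s + t.choose (j + 1) * St (j + 1) s := by
        intro j
        rw [Nat.choose_succ_succ, add_mul]
      have expand : ∑ j ∈ Finset.range (t + 2), (t + 1).choose j * St j s
          = (∑ j ∈ Finset.range (t + 1), t.choose j * St (j + 1) s)
            + ∑ j ∈ Finset.range (t + 1), t.choose j * St j s := by
        rw [Finset.sum_range_succ' (fun j => (t + 1).choose j * St j s)]
        rw [Finset.sum_congr rfl fun j _ => hps j, Finset.sum_add_distrib]
        rw [add_assoc]
        congr 1
        have h := Finset.sum_range_succ' (fun j => t.choose j * St j s) (t + 1)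
        rw [Finset.sum_range_succ (fun j => t.choose j * St j s) (t + 1),
          Nat.choose_succ_self, zero_mul, add_zero] at h
        simpa using h.symm
      rw [expand, ← ih s]
      cases s with
      | zero =>
          have hz : ∀ j ∈ Finset.range (t + 1), t.choose j * St (j + 1) 0 = 0 := by
            intro j _; simp
          rw [Finset.sum_congr rfl hz, Finset.sum_const_zero]
          simp [St_succ_succ]
      | succ s' =>
          have hx : ∀ j ∈ Finset.range (t + 1), t.choose j * St (j + 1) (s' + 1)
              = (s' + 1) * (t.choose j * St j (s' + 1)) + t.choose j * St j s' := by
            intro j _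
            rw [St_succ_succ, mul_add, mul_left_comm]
          rw [Finset.sum_congr rfl hx, Finset.sum_add_distrib, ← Finset.mul_sum,
            ← ih (s' + 1), ← ih s']
          show St (t + 1 + 1) (s' + 1 + 1) = _
          rw [St_succ_succ (t + 1) (s' + 1)]
          ring

/-- Number of set partitions of `[t]` into at most `n` blocks. -/
def Pfun (n t : ℕ) : ℕ := ∑ s ∈ Finset.range (n + 1), St t s

lemma Pfun_zero_right (n : ℕ) : Pfun n 0 = 1 := by
  rw [Pfun, Finset.sum_eq_single 0]
  · rfl
  · intro s _ hs
    match s, hs with | s + 1, _ => rfl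
  · simp

lemma Pfun_zero_left (t : ℕ) : Pfun 0 t = St t 0 := by
  rw [Pfun]
  simp

lemma Pfun_rec (n t : ℕ) :
    Pfun (n + 1) (t + 1) = ∑ j ∈ Finset.range (t + 1), t.choose j * Pfun n j := by
  rw [Pfun, Finset.sum_range_succ' (fun s => St (t + 1) s), St_succ_zero, add_zero]
  have h1 : ∀ s ∈ Finset.range (n + 1), St (t + 1) (s + 1)
      = ∑ j ∈ Finset.range (t + 1), t.choose j * St j s := fun s _ => St_rec t s
  rw [Finset.sum_congr rfl h1, Finset.sum_comm]
  refine Finset.sum_congr rfl fun j _ => ?_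
  rw [← Finset.mul_sum, Pfun]

lemma Nseq_eq_Pfun : ∀ n t : ℕ, Nseq n t = (Pfun n t : ℚ) := by
  intro n
  induction n with
  | zero =>
      intro t
      cases t with
      | zero => rw [Nseq_zero, Pfun_zero_right]; norm_num
      | succ t => rw [Nseq_of_zero, Pfun_zero_left]; simp
  | succ n ih =>
      intro t
      cases t with
      | zero => rw [Nseq_zero, Pfun_zero_right]; norm_num
      | succ t =>
          rw [Nrec, Pfun_rec]
          push_cast
          exact Finset.sum_congr rfl fun j _ => by rw [ih j]

lemma desc_mul (m s : ℕ) :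
    m.descFactorial s * m = m.descFactorial (s + 1) + s * m.descFactorial s := by
  rcases le_or_gt s m with h | h
  · rw [Nat.descFactorial_succ]
    have hms : m - s + s = m := Nat.sub_add_cancel h
    calc m.descFactorial s * m = m.descFactorial s * (m - s + s) := by rw [hms]
    _ = (m - s) * m.descFactorial s + s * m.descFactorial s := by ring
  · rw [Nat.descFactorial_eq_zero_iff_lt.mpr h,
      Nat.descFactorial_eq_zero_iff_lt.mpr (by omega)]
    simp

lemma pow_eq_sum_St (m : ℕ) : ∀ t : ℕ,
    m ^ t = ∑ s ∈ Finset.range (t + 1), St t s * m.descFactorial s := by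
  intro t
  induction t with
  | zero => simp
  | succ t ih =>
      rw [pow_succ, ih, Finset.sum_mul]
      have h1 : ∀ s ∈ Finset.range (t + 1), St t s * m.descFactorial s * m
          = St t s * m.descFactorial (s + 1) + s * (St t s * m.descFactorial s) := by
        intro s _
        rw [mul_assoc, desc_mul, mul_add, mul_left_comm]
      rw [Finset.sum_congr rfl h1, Finset.sum_add_distrib]
      have h2 : ∑ s ∈ Finset.range (t + 1), s * (St t s * m.descFactorial s)
          = ∑ s ∈ Finset.range (t + 1), (s + 1) * (St t (s + 1) * m.descFactorial (s + 1)) := by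
        have e1 : ∑ s ∈ Finset.range (t + 2), s * (St t s * m.descFactorial s)
            = ∑ s ∈ Finset.range (t + 1), s * (St t s * m.descFactorial s) := by
          rw [Finset.sum_range_succ, St_eq_zero_of_lt (by omega)]
          simp
        rw [← e1, Finset.sum_range_succ' (fun s => s * (St t s * m.descFactorial s))]
        simp
      rw [h2]
      rw [Finset.sum_range_succ' (fun s => St (t + 1) s * m.descFactorial s)]
      have h3 : ∀ s ∈ Finset.range (t + 1), St (t + 1) (s + 1) * m.descFactorial (s + 1)
          = (s + 1) * (St t (s + 1) * m.descFactorial (s + 1))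
            + St t s * m.descFactorial (s + 1) := by
        intro s _
        rw [St_succ_succ, add_mul, mul_assoc]
      rw [Finset.sum_congr rfl h3, Finset.sum_add_distrib]
      simp [add_comm]

end TsetlinAux

namespace TsetlinAux

/-- Number of fixed points of a permutation. -/
noncomputable def fp {n : ℕ} (σ : Perm (Fin n)) : ℕ := Fintype.card {i : Fin n // σ i = i}

lemma fp_le {n : ℕ} (σ : Perm (Fin n)) : fp σ ≤ n := by
  rw [fp]
  simpa using Fintype.card_subtype_le (fun i : Fin n => σ i = i)

/-- Pairs (permutation, embedding into its fixed points) are the same as pairs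
(embedding into `Fin n`, permutation fixing its image). -/
def sigmaEquiv (n s : ℕ) :
    (Σ σ : Perm (Fin n), (Fin s ↪ {i : Fin n // σ i = i})) ≃
      (Σ f : Fin s ↪ Fin n, {σ : Perm (Fin n) // ∀ a, σ (f a) = f a}) where
  toFun x := ⟨x.2.trans (Function.Embedding.subtype _), x.1, fun a => (x.2 a).2⟩
  invFun y := ⟨y.2.1,
    ⟨fun a => ⟨y.1 a, y.2.2 a⟩,
     fun a b hab => y.1.injective (congrArg Subtype.val hab)⟩⟩
  left_inv := by
    rintro ⟨σ, e⟩
    rfl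
  right_inv := by
    rintro ⟨f, σ, h⟩
    rfl

lemma desc_fact {n s : ℕ} (h : s ≤ n) :
    n.descFactorial s * (n - s).factorial = n.factorial := by
  induction s with
  | zero => simp
  | succ s ih =>
      have hs : s ≤ n := by omega
      have h2 : n - s = n - (s + 1) + 1 := by omega
      rw [Nat.descFactorial_succ, h2]
      calc (n - (s + 1) + 1) * n.descFactorial s * (n - (s + 1)).factorial
          = n.descFactorial s * ((n - (s + 1) + 1) * (n - (s + 1)).factorial) := by ring
        _ = n.descFactorial s * (n - (s + 1) + 1).factorial := by rw [Nat.factorial_succ]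
        _ = n.descFactorial s * (n - s).factorial := by rw [← h2]
        _ = n.factorial := ih hs

lemma card_fixing {n s : ℕ} (f : Fin s ↪ Fin n) :
    Fintype.card {σ : Perm (Fin n) // ∀ a, σ (f a) = f a} = (n - s).factorial := by
  classical
  have e2 : {σ : Perm (Fin n) // ∀ x : Fin n, ¬ (x ∉ Set.range f) → σ x = x} ≃
      {σ : Perm (Fin n) // ∀ a, σ (f a) = f a} := by
    refine Equiv.subtypeEquivRight fun σ => ?_
    constructor
    · intro h a
      exact h (f a) (by simp)
    · intro h x hx
      rw [not_not] at hx
      obtain ⟨a, rfl⟩ := hx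
      exact h a
  have e1 := (Equiv.Perm.subtypeEquivSubtypePerm (fun x : Fin n => x ∉ Set.range f)).trans e2
  rw [← Fintype.card_congr e1, Fintype.card_perm]
  congr 1
  rw [Fintype.card_subtype_compl]
  congr 1
  · exact Fintype.card_fin n
  · have h5 : Fintype.card {x : Fin n // x ∈ Set.range ⇑f} = Fintype.card (Set.range ⇑f) :=
      Fintype.card_congr (Equiv.subtypeEquivRight fun x => Iff.rfl)
    rw [h5, Set.card_range_of_injective f.injective, Fintype.card_fin]

lemma sum_desc {n : ℕ} (s : ℕ) (hs : s ≤ n) :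
    ∑ σ : Perm (Fin n), (fp σ).descFactorial s = n.factorial := by
  classical
  have h1 : ∀ σ : Perm (Fin n), (fp σ).descFactorial s
      = Fintype.card (Fin s ↪ {i : Fin n // σ i = i}) := by
    intro σ
    rw [Fintype.card_embedding_eq, Fintype.card_fin, fp]
  rw [Finset.sum_congr rfl fun σ _ => h1 σ, ← Fintype.card_sigma,
    Fintype.card_congr (sigmaEquiv n s), Fintype.card_sigma,
    Finset.sum_congr rfl fun f _ => card_fixing f, Finset.sum_const, Finset.card_univ,
    Fintype.card_embedding_eq, Fintype.card_fin, Fintype.card_fin, smul_eq_mul]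
  exact desc_fact hs

lemma fixsum (n t : ℕ) :
    ∑ σ : Perm (Fin n), (fp σ) ^ t = n.factorial * Pfun n t := by
  classical
  have h1 : ∀ σ : Perm (Fin n), (fp σ) ^ t
      = ∑ s ∈ Finset.range (t + 1), St t s * (fp σ).descFactorial s :=
    fun σ => pow_eq_sum_St (fp σ) t
  rw [Finset.sum_congr rfl fun σ _ => h1 σ, Finset.sum_comm]
  have h2 : ∀ s ∈ Finset.range (t + 1),
      (∑ σ : Perm (Fin n), St t s * (fp σ).descFactorial s)
        = St t s * (if s ≤ n then n.factorial else 0) := by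
    intro s _
    rw [← Finset.mul_sum]
    congr 1
    by_cases hsn : s ≤ n
    · rw [if_pos hsn, sum_desc s hsn]
    · rw [if_neg hsn]
      refine Finset.sum_eq_zero fun σ _ => ?_
      exact Nat.descFactorial_eq_zero_iff_lt.mpr (by have := fp_le σ; omega)
  rw [Finset.sum_congr rfl h2]
  have h3 : ∑ s ∈ Finset.range (t + 1), St t s * (if s ≤ n then n.factorial else 0)
      = ∑ s ∈ Finset.range (min (t + 1) (n + 1)), St t s * n.factorial := by
    rw [show Finset.range (min (t+1) (n+1)) = (Finset.range (t+1)).filter (fun s => s ≤ n) by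
      ext a; simp]
    rw [Finset.sum_filter]
    refine Finset.sum_congr rfl fun s _ => ?_
    split_ifs <;> simp
  rw [h3]
  have h4 : ∑ s ∈ Finset.range (min (t + 1) (n + 1)), St t s * n.factorial
      = ∑ s ∈ Finset.range (n + 1), St t s * n.factorial := by
    refine Finset.sum_subset (by intro a ha; simp at ha ⊢; omega) ?_
    intro s hs hns
    simp only [Finset.mem_range] at hs hns
    rw [St_eq_zero_of_lt (by omega), zero_mul]
  rw [h4, Pfun, Finset.mul_sum]
  refine Finset.sum_congr rfl fun s _ => mul_comm _ _

lemma fixCount_eq (n k : ℕ) :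
    fixCount n k = Fintype.card {σ : Perm (Fin n) // fp σ = k} := by
  classical
  rw [fixCount, Nat.card_eq_fintype_card]
  refine Fintype.card_congr (Equiv.subtypeEquivRight fun σ => ?_)
  rw [Nat.card_eq_fintype_card, fp]

lemma sum_fixCount (n t : ℕ) :
    ∑ k ∈ Finset.range (n + 1), fixCount n k * k ^ t
      = n.factorial * Pfun n t := by
  classical
  rw [← fixsum n t,
    ← Finset.sum_fiberwise_of_maps_to (g := fp) (t := Finset.range (n + 1))
      (fun σ _ => Finset.mem_range.mpr (Nat.lt_succ_of_le (fp_le σ)))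
      (fun σ => (fp σ) ^ t)]
  refine Finset.sum_congr rfl fun k _ => ?_
  have h1 : ∀ σ ∈ Finset.filter (fun σ : Perm (Fin n) => fp σ = k) Finset.univ, (fp σ) ^ t = k ^ t := by
    intro σ hσ
    rw [(Finset.mem_filter.mp hσ).2]
  rw [Finset.sum_congr rfl h1, Finset.sum_const, smul_eq_mul, fixCount_eq,
    Fintype.card_subtype]

end TsetlinAux

namespace TsetlinAux

noncomputable instance (n : ℕ) : Module.Finite ℚ (MonoidAlgebra ℚ (Perm (Fin n))) :=
  Module.Finite.of_basis (MonoidAlgebra.basis (Perm (Fin n)) ℚ)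

lemma mulRight_pow (n : ℕ) (x : MonoidAlgebra ℚ (Perm (Fin n))) (t : ℕ) :
    (LinearMap.mulRight ℚ x) ^ t = LinearMap.mulRight ℚ (x ^ t) := by
  induction t with
  | zero =>
      rw [pow_zero, pow_zero, LinearMap.mulRight_one]
      rfl
  | succ t ih =>
      rw [pow_succ, ih]
      refine LinearMap.ext fun v => ?_
      simp only [Module.End.mul_apply, LinearMap.mulRight_apply]
      rw [mul_assoc, ← pow_succ']

lemma mulRight_lin_add (n : ℕ) (x y : MonoidAlgebra ℚ (Perm (Fin n))) :
    LinearMap.mulRight ℚ (x + y) = LinearMap.mulRight ℚ x + LinearMap.mulRight ℚ y := by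
  refine LinearMap.ext fun v => ?_
  simp [mul_add]

lemma mulRight_lin_smul (n : ℕ) (c : ℚ) (x : MonoidAlgebra ℚ (Perm (Fin n))) :
    LinearMap.mulRight ℚ (c • x) = c • LinearMap.mulRight ℚ x := by
  refine LinearMap.ext fun v => ?_
  simp [mul_smul_comm]

lemma mulRight_zero' (n : ℕ) :
    LinearMap.mulRight ℚ (0 : MonoidAlgebra ℚ (Perm (Fin n))) = 0 := by
  refine LinearMap.ext fun v => ?_
  simp

lemma mulRight_sum (n : ℕ) {ι : Type*} (s : Finset ι)
    (f : ι → MonoidAlgebra ℚ (Perm (Fin n))) :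
    LinearMap.mulRight ℚ (∑ i ∈ s, f i) = ∑ i ∈ s, LinearMap.mulRight ℚ (f i) := by
  classical
  induction s using Finset.induction_on with
  | empty => simpa using mulRight_zero' n
  | insert _ _ hnot ih =>
      rw [Finset.sum_insert hnot, Finset.sum_insert hnot, mulRight_lin_add, ih]

lemma aeval_mulRight (n : ℕ) (x : MonoidAlgebra ℚ (Perm (Fin n))) (p : Polynomial ℚ) :
    Polynomial.aeval (LinearMap.mulRight ℚ x :
        Module.End ℚ (MonoidAlgebra ℚ (Perm (Fin n)))) p
      = LinearMap.mulRight ℚ (Polynomial.aeval x p) := by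
  rw [Polynomial.aeval_eq_sum_range (p := p) (LinearMap.mulRight ℚ x :
        Module.End ℚ (MonoidAlgebra ℚ (Perm (Fin n)))),
    Polynomial.aeval_eq_sum_range (p := p) x]
  have h1 : ∀ i ∈ Finset.range (p.natDegree + 1),
      p.coeff i • (LinearMap.mulRight ℚ x :
        Module.End ℚ (MonoidAlgebra ℚ (Perm (Fin n)))) ^ i
        = LinearMap.mulRight ℚ (p.coeff i • x ^ i) := by
    intro i _
    rw [mulRight_pow, mulRight_lin_smul]
  rw [Finset.sum_congr rfl h1, mulRight_sum]

lemma trace_mulRight (n : ℕ) (x : MonoidAlgebra ℚ (Perm (Fin n))) :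
    LinearMap.trace ℚ _ (LinearMap.mulRight ℚ x :
        Module.End ℚ (MonoidAlgebra ℚ (Perm (Fin n))))
      = (n.factorial : ℚ) * x.coeff 1 := by
  classical
  set T : Module.End ℚ (MonoidAlgebra ℚ (Perm (Fin n))) := LinearMap.mulRight ℚ x with hT
  rw [LinearMap.trace_eq_matrix_trace (R := ℚ) (M := MonoidAlgebra ℚ (Perm (Fin n)))
    (b := (MonoidAlgebra.basis (Perm (Fin n)) ℚ))
    (f := T), Matrix.trace]
  have h1 : ∀ g : Perm (Fin n),
      Matrix.diag (LinearMap.toMatrix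
        (MonoidAlgebra.basis (Perm (Fin n)) ℚ)
        (MonoidAlgebra.basis (Perm (Fin n)) ℚ)
        T) g = x.coeff 1 := by
    intro g
    rw [Matrix.diag_apply, LinearMap.toMatrix_apply]
    simp only [MonoidAlgebra.basis_apply, LinearMap.mulRight_apply]
    show (MonoidAlgebra.single g (1:ℚ) * x).coeff g = x.coeff 1
    rw [MonoidAlgebra.coeff_single_mul_apply, one_mul, inv_mul_cancel]
  exact (Finset.sum_congr rfl fun g _ => h1 g).trans (by
    rw [Finset.sum_const, Finset.card_univ, Fintype.card_perm, Fintype.card_fin, nsmul_eq_mul])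

end TsetlinAux

namespace TsetlinAux

noncomputable def Topr (n : ℕ) : Module.End ℚ (MonoidAlgebra ℚ (Perm (Fin n))) :=
  LinearMap.mulRight ℚ (tsetlin n)

noncomputable def Esp (n : ℕ) (k : Fin (n + 1)) :
    Submodule ℚ (MonoidAlgebra ℚ (Perm (Fin n))) :=
  Module.End.eigenspace (Topr n) ((k : ℕ) : ℚ)

lemma aeval_qpoly_Topr (n : ℕ) : Polynomial.aeval (Topr n) (qpoly n) = 0 := by
  rw [Topr, aeval_mulRight, aeval_qpoly_tsetlin, mulRight_zero']

noncomputable def nodes (n : ℕ) : Finset ℚ := (Finset.range (n + 1)).image (Nat.cast : ℕ → ℚ)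

lemma prod_nodes (n : ℕ) : ∏ x ∈ nodes n, (X - C x) = qpoly n := by
  rw [nodes, Finset.prod_image, qpoly]
  intro a _ b _ h
  exact_mod_cast h

lemma key_lagrange (n : ℕ) {j : ℚ} (hj : j ∈ nodes n) :
    (X - C j) * Lagrange.basis (nodes n) id j
      = C (∏ x ∈ (nodes n).erase j, (j - x)⁻¹) * qpoly n := by
  rw [Lagrange.basis]
  simp only [Lagrange.basisDivisor, id]
  rw [Finset.prod_mul_distrib, ← map_prod, ← prod_nodes n,
    ← Finset.mul_prod_erase (nodes n) _ hj]
  ring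

lemma cover (n : ℕ) : ⨆ k : Fin (n + 1), Esp n k = ⊤ := by
  classical
  rw [eq_top_iff]
  intro v _
  have hinj : Set.InjOn (id : ℚ → ℚ) (nodes n) := fun a _ b _ h => h
  have hne : (nodes n).Nonempty := ⟨(0 : ℚ), by simp [nodes]⟩
  have hsum := Lagrange.sum_basis hinj hne
  have hv : v = ∑ j ∈ nodes n, (Polynomial.aeval (Topr n) (Lagrange.basis (nodes n) id j)) v := by
    calc v = (Polynomial.aeval (Topr n) (1 : Polynomial ℚ)) v := by simp
      _ = (Polynomial.aeval (Topr n) (∑ j ∈ nodes n, Lagrange.basis (nodes n) id j)) v := by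
          rw [hsum]
      _ = (∑ j ∈ nodes n, Polynomial.aeval (Topr n) (Lagrange.basis (nodes n) id j)) v := by
          rw [map_sum]
      _ = ∑ j ∈ nodes n, (Polynomial.aeval (Topr n) (Lagrange.basis (nodes n) id j)) v := by
          rw [LinearMap.sum_apply]
  rw [hv]
  refine Submodule.sum_mem _ fun j hj => ?_
  obtain ⟨k, hk, rfl⟩ := Finset.mem_image.mp hj
  refine Submodule.mem_iSup_of_mem (⟨k, Finset.mem_range.mp hk⟩ : Fin (n + 1)) ?_
  rw [Esp, Module.End.mem_eigenspace_iff]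
  have hz : Polynomial.aeval (Topr n)
      ((X - C ((k : ℕ) : ℚ)) * Lagrange.basis (nodes n) id ((k : ℕ) : ℚ)) = 0 := by
    rw [key_lagrange n hj, map_mul, aeval_qpoly_Topr, mul_zero]
  have hz2 := congrArg (fun F : Module.End ℚ (MonoidAlgebra ℚ (Perm (Fin n))) => F v) hz
  simp only [map_mul, map_sub, Polynomial.aeval_X, Polynomial.aeval_C,
    Module.End.mul_apply, LinearMap.zero_apply, LinearMap.sub_apply,
    Module.algebraMap_end_apply] at hz2
  exact sub_eq_zero.mp hz2

lemma isInternal (n : ℕ) : DirectSum.IsInternal (Esp n) := by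
  rw [DirectSum.isInternal_submodule_iff_iSupIndep_and_iSup_eq_top]
  refine ⟨?_, cover n⟩
  have h := Module.End.eigenspaces_iSupIndep (Topr n)
  have hinj : Function.Injective (fun k : Fin (n + 1) => ((k : ℕ) : ℚ)) := by
    intro a b hab
    have hab' : ((a : ℕ) : ℚ) = ((b : ℕ) : ℚ) := hab
    exact Fin.ext (by exact_mod_cast hab')
  exact h.comp hinj

lemma pow_mem (n t : ℕ) (k : Fin (n + 1)) :
    Set.MapsTo (⇑((Topr n) ^ t)) (Esp n k) (Esp n k) := by
  intro x hx
  have hx' := hx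
  rw [Esp, SetLike.mem_coe, Module.End.mem_eigenspace_iff] at hx'
  have hpt : ((Topr n) ^ t) x = (((k : ℕ) : ℚ)) ^ t • x := by
    induction t with
    | zero => simp
    | succ t ih =>
        rw [pow_succ', Module.End.mul_apply, ih, map_smul, hx', smul_smul, ← pow_succ]
  show ((Topr n) ^ t) x ∈ Esp n k
  rw [hpt]
  exact Submodule.smul_mem _ _ hx

lemma trace_pow_eq_sum (n t : ℕ) :
    LinearMap.trace ℚ _ ((Topr n) ^ t)
      = ∑ k : Fin (n + 1), (((k : ℕ) : ℚ)) ^ t * (Module.finrank ℚ (Esp n k) : ℚ) := by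
  classical
  rw [LinearMap.trace_eq_sum_trace_restrict (isInternal n) (fun k => pow_mem n t k)]
  refine Finset.sum_congr rfl fun k _ => ?_
  have hres : (((Topr n) ^ t).restrict (pow_mem n t k)) =
      ((((k : ℕ) : ℚ)) ^ t) • (LinearMap.id : Esp n k →ₗ[ℚ] Esp n k) := by
    refine LinearMap.ext fun x => ?_
    have hx' : (Topr n) x.val = ((k : ℕ) : ℚ) • x.val :=
      Module.End.mem_eigenspace_iff.mp x.property
    have hpt : ((Topr n) ^ t) x.val = (((k : ℕ) : ℚ)) ^ t • x.val := by
      induction t with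
      | zero => simp
      | succ t ih =>
          rw [pow_succ', Module.End.mul_apply, ih, map_smul, hx', smul_smul, ← pow_succ]
    refine Subtype.ext ?_
    show ((Topr n) ^ t) x.val = _
    simp only [LinearMap.smul_apply, LinearMap.id_apply, SetLike.val_smul]
    exact hpt
  rw [hres, map_smul, LinearMap.trace_id, smul_eq_mul]

lemma dim_system (n t : ℕ) :
    ∑ k : Fin (n + 1), (((k : ℕ) : ℚ)) ^ t * (Module.finrank ℚ (Esp n k) : ℚ)
      = ∑ k : Fin (n + 1), (((k : ℕ) : ℚ)) ^ t * (fixCount n (k : ℕ) : ℚ) := by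
  rw [← trace_pow_eq_sum]
  have e1 : (Topr n) ^ t = LinearMap.mulRight ℚ ((tsetlin n) ^ t) := mulRight_pow n _ t
  rw [e1, trace_mulRight, tsetlin_pow_apply_one, Nseq_eq_Pfun]
  have e2 := sum_fixCount n t
  have e3 : ((∑ k ∈ Finset.range (n + 1), fixCount n k * k ^ t : ℕ) : ℚ)
      = ((n.factorial * Pfun n t : ℕ) : ℚ) := congrArg (Nat.cast : ℕ → ℚ) e2
  push_cast at e3
  rw [← e3, ← Fin.sum_univ_eq_sum_range (fun k => (fixCount n k : ℚ) * (k : ℚ) ^ t)]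
  push_cast
  refine Finset.sum_congr rfl fun k _ => by ring

lemma finrank_Esp (n : ℕ) (k : Fin (n + 1)) :
    Module.finrank ℚ (Esp n k) = fixCount n (k : ℕ) := by
  classical
  set w : Fin (n + 1) → ℚ :=
    fun k => (Module.finrank ℚ (Esp n k) : ℚ) - (fixCount n (k : ℕ) : ℚ) with hw
  have hzero : w = 0 := by
    refine Matrix.eq_zero_of_vecMul_eq_zero
      (M := Matrix.vandermonde (fun i : Fin (n + 1) => ((i : ℕ) : ℚ))) ?_ ?_
    · rw [Matrix.det_vandermonde_ne_zero_iff]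
      intro a b hab
      have hab' : ((a : ℕ) : ℚ) = ((b : ℕ) : ℚ) := hab
      exact Fin.ext (by exact_mod_cast hab')
    · funext t
      show ∑ k : Fin (n + 1), w k * Matrix.vandermonde (fun i : Fin (n + 1) => ((i : ℕ) : ℚ)) k t = 0
      simp only [Matrix.vandermonde_apply, hw, sub_mul]
      rw [Finset.sum_sub_distrib]
      have := dim_system n (t : ℕ)
      have h1 : ∑ k : Fin (n + 1), (Module.finrank ℚ (Esp n k) : ℚ) * ((k : ℕ) : ℚ) ^ (t : ℕ)
          = ∑ k : Fin (n + 1), (fixCount n (k : ℕ) : ℚ) * ((k : ℕ) : ℚ) ^ (t : ℕ) := by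
        calc ∑ k : Fin (n + 1), (Module.finrank ℚ (Esp n k) : ℚ) * ((k : ℕ) : ℚ) ^ (t : ℕ)
            = ∑ k : Fin (n + 1), ((k : ℕ) : ℚ) ^ (t : ℕ) * (Module.finrank ℚ (Esp n k) : ℚ) := by
              refine Finset.sum_congr rfl fun k _ => by ring
          _ = ∑ k : Fin (n + 1), ((k : ℕ) : ℚ) ^ (t : ℕ) * (fixCount n (k : ℕ) : ℚ) :=
              dim_system n (t : ℕ)
          _ = ∑ k : Fin (n + 1), (fixCount n (k : ℕ) : ℚ) * ((k : ℕ) : ℚ) ^ (t : ℕ) := by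
              refine Finset.sum_congr rfl fun k _ => by ring
      rw [h1, sub_self]
  have hk := congrFun hzero k
  simp only [hw, Pi.zero_apply] at hk
  have := sub_eq_zero.mp hk
  exact_mod_cast this

end TsetlinAux

theorem stmt_8 (n k : ℕ) (hk : k + 2 ≤ n ∨ k = n) :
    Module.finrank ℚ
        (Module.End.eigenspace
          (LinearMap.mulRight ℚ (tsetlin n) :
            Module.End ℚ (MonoidAlgebra ℚ (Perm (Fin n)))) (k : ℚ)) =
      fixCount n k := by
  have hk' : k < n + 1 := by rcases hk with h | h <;> omega
  have h := TsetlinAux.finrank_Esp n ⟨k, hk'⟩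
  exact h
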